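/- The Gaussian Mill's ratio G(x) = Φᶜ(x)/γ(x) is strictly decreasing on all of ℝ. -/

import Mathlib

open Real MeasureTheory

/-- The Gaussian Mill's ratio G = Φᶜ/γ is strictly decreasing on ℝ. -/
theorem mills_ratio_strictAnti
    (γ Φc G : ℝ → ℝ)
    (hγ : ∀ x, γ x = (Real.sqrt (2 * Real.pi))⁻¹ * Real.exp (-x ^ 2 / 2))
    (hΦc : ∀ x, Φc x = ∫ u in Set.Ioi x, γ u)
    (hG : ∀ x, G x = Φc x / γ x) :
    StrictAnti G := by
  have hc : (0:ℝ) < (Real.sqrt (2 * Real.pi))⁻¹ := by positivity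
  have hγpos : ∀ x, 0 < γ x := fun x => by rw [hγ x]; positivity
  have hγfun : γ = fun x => (Real.sqrt (2 * Real.pi))⁻¹ * Real.exp (-x ^ 2 / 2) :=
    funext hγ
  have hγcont : Continuous γ := by rw [hγfun]; continuity
  have hγint : Integrable γ := by
    have h1 : Integrable (fun u : ℝ => Real.exp (-(1/2 : ℝ) * u ^ 2)) :=
      integrable_exp_neg_mul_sq (by norm_num)
    have h2 : Integrable (fun u : ℝ => (Real.sqrt (2 * Real.pi))⁻¹ *
        Real.exp (-(1/2 : ℝ) * u ^ 2)) := h1.const_mul _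
    refine h2.congr (Filter.Eventually.of_forall fun u => ?_)
    simp only [hγ u]
    norm_num
    left
    ring_nf
  have hγint' : Integrable (fun u : ℝ => u * γ u) := by
    have h1 : Integrable (fun u : ℝ => u * Real.exp (-(1/2 : ℝ) * u ^ 2)) :=
      integrable_mul_exp_neg_mul_sq (by norm_num)
    have h2 : Integrable (fun u : ℝ => (Real.sqrt (2 * Real.pi))⁻¹ *
        (u * Real.exp (-(1/2 : ℝ) * u ^ 2))) := h1.const_mul _
    refine h2.congr (Filter.Eventually.of_forall fun u => ?_)
    simp only [hγ u]
    ring_nf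
  -- derivative of γ
  have hγderiv : ∀ u : ℝ, HasDerivAt γ (-(u * γ u)) u := by
    intro u
    have h1 : HasDerivAt (fun v : ℝ => -v ^ 2 / 2) (-u) u := by
      have h := (((hasDerivAt_pow 2 u).neg).div_const 2)
      refine h.congr_deriv ?_
      push_cast
      ring
    have h2 : HasDerivAt (fun v : ℝ => Real.exp (-v ^ 2 / 2))
        (Real.exp (-u ^ 2 / 2) * (-u)) u := h1.exp
    have h3 := h2.const_mul (Real.sqrt (2 * Real.pi))⁻¹
    rw [hγfun]
    refine h3.congr_deriv ?_
    simp only [hγ u] at *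
    ring
  -- γ tends to 0 at +∞
  have hγtend : Filter.Tendsto γ Filter.atTop (nhds 0) := by
    have h1 : Filter.Tendsto (fun u : ℝ => -u ^ 2 / 2) Filter.atTop Filter.atBot := by
      apply Filter.Tendsto.atBot_div_const (by norm_num)
      exact Filter.tendsto_neg_atBot_iff.mpr (Filter.tendsto_pow_atTop two_ne_zero)
    have h2 : Filter.Tendsto (fun u : ℝ => Real.exp (-u ^ 2 / 2)) Filter.atTop
        (nhds 0) := Real.tendsto_exp_atBot.comp h1
    have h3 := h2.const_mul (Real.sqrt (2 * Real.pi))⁻¹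
    simp only [mul_zero] at h3
    refine h3.congr fun u => (hγ u).symm
  -- ∫ u in Ioi x, u * γ u = γ x
  have hint_eq : ∀ x : ℝ, ∫ u in Set.Ioi x, u * γ u = γ x := by
    intro x
    have h := MeasureTheory.integral_Ioi_of_hasDerivAt_of_tendsto'
      (f := γ) (f' := fun u => -(u * γ u)) (a := x)
      (fun u _ => hγderiv u) ((hγint'.neg).integrableOn) hγtend
    rw [MeasureTheory.integral_neg] at h
    have h2 := congrArg Neg.neg h
    simpa using h2
  -- Φc positive
  have hΦcpos : ∀ x, 0 < Φc x := by
    intro x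
    rw [hΦc x]
    apply (MeasureTheory.setIntegral_pos_iff_support_of_nonneg_ae
      (Filter.Eventually.of_forall fun u => (hγpos u).le) hγint.integrableOn).mpr
    have hs : Function.support γ = Set.univ := by
      ext u; simp [Function.mem_support, (hγpos u).ne']
    rw [hs]
    simp only [Set.univ_inter]
    exact Measure.measure_Ioi_pos _ x
  -- key inequality: x * Φc x < γ x
  have hkey : ∀ x : ℝ, x * Φc x < γ x := by
    intro x
    have hintsub : Integrable (fun u : ℝ => (u - x) * γ u) := by
      have := hγint'.sub (hγint.const_mul x)
      refine this.congr (Filter.Eventually.of_forall fun u => ?_)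
      simp only [Pi.sub_apply]
      ring
    have heq : ∫ u in Set.Ioi x, (u - x) * γ u = γ x - x * Φc x := by
      rw [show (fun u : ℝ => (u - x) * γ u) = fun u => u * γ u - x * γ u from
        funext fun u => by ring]
      rw [MeasureTheory.integral_sub hγint'.integrableOn
        ((hγint.integrableOn).const_mul x), hint_eq x,
        MeasureTheory.integral_const_mul, ← hΦc x]
    have hnonneg : 0 ≤ᵐ[volume.restrict (Set.Ioi x)] fun u : ℝ => (u - x) * γ u := by
      filter_upwards [MeasureTheory.ae_restrict_mem measurableSet_Ioi] with u hu
      have : (0:ℝ) ≤ u - x := by simp at hu; linarith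
      exact mul_nonneg this (hγpos u).le
    have h1 : ∫ u in Set.Ioi (x+1), γ u ≤ ∫ u in Set.Ioi (x+1), (u - x) * γ u := by
      apply MeasureTheory.setIntegral_mono_on hγint.integrableOn
        hintsub.integrableOn measurableSet_Ioi
      intro u hu
      have h2 : (1:ℝ) ≤ u - x := by simp at hu; linarith
      nlinarith [(hγpos u).le, hγpos u]
    have h2 : ∫ u in Set.Ioi (x+1), (u - x) * γ u ≤ ∫ u in Set.Ioi x, (u - x) * γ u := by
      apply MeasureTheory.setIntegral_mono_set hintsub.integrableOn hnonneg
      exact HasSubset.Subset.eventuallyLE (Set.Ioi_subset_Ioi (by linarith))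
    have h3 := hΦcpos (x+1)
    rw [hΦc (x+1)] at h3
    linarith [heq ▸ (h2.trans_lt' (h3.trans_le h1)), heq]
  -- derivative of Φc
  have hΦcderiv : ∀ x : ℝ, HasDerivAt Φc (-γ x) x := by
    intro x
    have hrepr : ∀ y : ℝ, Φc y = Φc 0 - ∫ t in (0:ℝ)..y, γ t := by
      intro y
      have h0 : ∫ t in (0:ℝ)..y, γ t =
          (∫ t in Set.Iic y, γ t) - ∫ t in Set.Iic (0:ℝ), γ t :=
        (intervalIntegral.integral_Iic_sub_Iic hγint.integrableOn
          hγint.integrableOn).symm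
      have hsplit : ∀ a : ℝ, (∫ t in Set.Iic a, γ t) + Φc a = ∫ t, γ t := by
        intro a
        rw [hΦc a, ← MeasureTheory.integral_add_compl
          (measurableSet_Iic (a := a)) hγint]
        congr 1
        rw [Set.compl_Iic]
      have h1 := hsplit y
      have h2 := hsplit 0
      rw [h0]; linarith
    have hD : HasDerivAt (fun y => ∫ t in (0:ℝ)..y, γ t) (γ x) x :=
      intervalIntegral.integral_hasDerivAt_right
        (hγint.intervalIntegrable)
        (hγcont.stronglyMeasurable.stronglyMeasurableAtFilter)
        hγcont.continuousAt
    have h := (hD.const_sub (Φc 0))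
    exact h.congr_of_eventuallyEq (Filter.Eventually.of_forall hrepr)
  -- derivative of G
  have hGderiv : ∀ x : ℝ, HasDerivAt G (x * G x - 1) x := by
    intro x
    have h := (hΦcderiv x).div (hγderiv x) (hγpos x).ne'
    have hx : G =ᶠ[nhds x] fun y => Φc y / γ y := Filter.Eventually.of_forall hG
    have h2 := h.congr_of_eventuallyEq hx
    refine h2.congr_deriv ?_
    rw [hG x]
    field_simp [(hγpos x).ne']
    ring
  have hGd : ∀ x : ℝ, deriv G x < 0 := by
    intro x
    rw [(hGderiv x).deriv]
    have h1 := hkey x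
    have h2 := hγpos x
    rw [hG x, sub_neg]
    calc x * (Φc x / γ x) = (x * Φc x) / γ x := by ring
      _ < γ x / γ x := by apply div_lt_div_of_pos_right h1 h2
      _ = 1 := div_self h2.ne'
  exact strictAnti_of_deriv_neg hGd
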